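/- Let W∞ be the infinite dihedral group, i.e. the free product of two cyclic groups of order 2, with generators u and v (u² = v² = 1), and let A be the group algebra of W∞ over the polynomial ring ℤ[x,y]. Then for every m ≥ 0, the identity ⟨u + x, v + y⟩_m = Σ_{l,l' ≥ 0} x^l y^{l'} · Σ_{k ∈ ℤ} α^{(m)}_{k,l,l'} ⟨u,v⟩_k holds in A, where ⟨u,v⟩_k ∈ W∞ and all sums have only finitely many nonzero terms. -/

import Mathlib

/-- `altProd a b k` is the alternating product `a * b * a * b * ⋯` with `k` factors. -/
def altProd {M : Type*} [Monoid M] (a b : M) : ℕ → M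
  | 0 => 1
  | k + 1 => a * altProd b a k

/-- `altProdInt a b k` for `k : ℤ`: `⟨a,b⟩_k` for `k ≥ 0` and `⟨b,a⟩_{-k}` for `k < 0`. -/
def altProdInt {G : Type*} [Monoid G] (a b : G) (k : ℤ) : G :=
  if 0 ≤ k then altProd a b k.toNat else altProd b a (-k).toNat

/-- The integers `α^{(m)}_{k,l,l'}`, defined by the recursion
`α^{(0)}_{k,l,l'} = δ_{k,0}δ_{l,0}δ_{l',0}`,
`α^{(m+1)}_{k,l,l'} = α^{(m)}_{k-1,l',l} + α^{(m)}_{-k,l',l-1}`, with `α^{(m)}_{k,l,l'} = 0`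
whenever `l < 0` or `l' < 0`. -/
def alternatingAlpha : ℕ → ℤ → ℤ → ℤ → ℤ
  | 0, k, l, l' => if k = 0 ∧ l = 0 ∧ l' = 0 then 1 else 0
  | m + 1, k, l, l' =>
      if l < 0 ∨ l' < 0 then 0
      else alternatingAlpha m (k - 1) l' l + alternatingAlpha m (-k) l' (l - 1)

open Finset

lemma alpha_eq_zero : ∀ (m : ℕ) (k l l' : ℤ),
    (k < -(m:ℤ) ∨ (m:ℤ) < k ∨ (m:ℤ) < l ∨ (m:ℤ) < l' ∨ l < 0 ∨ l' < 0) →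
    alternatingAlpha m k l l' = 0 := by
  intro m
  induction m with
  | zero =>
    intro k l l' h
    simp only [alternatingAlpha, Nat.cast_zero] at *
    rw [if_neg]
    rintro ⟨rfl, rfl, rfl⟩
    omega
  | succ n ih =>
    intro k l l' h
    simp only [alternatingAlpha]
    split
    · rfl
    · rename_i hok
      push_neg at hok
      rw [ih (k-1) l' l (by push_cast at h ⊢; omega),
        ih (-k) l' (l-1) (by push_cast at h ⊢; omega), add_zero]

section General

variable {R : Type*} [CommRing R] {G : Type*} [Group G]

lemma altProdInt_neg (U V : G) (k : ℤ) : altProdInt U V (-k) = altProdInt V U k := by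
  unfold altProdInt
  rcases lt_trichotomy k 0 with h | rfl | h
  · rw [if_pos (by omega), if_neg (by omega)]
  · simp [altProd]
  · rw [if_neg (by omega), if_pos (by omega), neg_neg]

lemma mul_altProdInt (U V : G) (hU : U * U = 1) (k : ℤ) :
    U * altProdInt V U k = altProdInt U V (k + 1) := by
  unfold altProdInt
  rcases lt_trichotomy k (-1) with h | rfl | h
  · rw [if_neg (by omega), if_neg (by omega)]
    have hn : (-k).toNat = (-(k+1)).toNat + 1 := by omega
    rw [hn]
    show U * (U * altProd V U _) = _
    rw [← mul_assoc, hU, one_mul]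
  · norm_num
    show U * (U * altProd V U 0) = altProd U V 0
    simp [altProd, hU]
  · rw [if_pos (by omega), if_pos (by omega)]
    have hn : (k+1).toNat = k.toNat + 1 := by omega
    rw [hn]
    rfl

noncomputable def Ssum (U V : G) (X Y : R) (m : ℕ) : MonoidAlgebra R G :=
  ∑ l ∈ range (m+1), ∑ l' ∈ range (m+1),
    algebraMap R (MonoidAlgebra R G) (X ^ l * Y ^ l') *
      ∑ k ∈ Icc (-(m:ℤ)) (m:ℤ),
        alternatingAlpha m k l l' • MonoidAlgebra.of R G (altProdInt U V k)

lemma A_eq (U V : G) (hU : U * U = 1) (X Y : R) (n : ℕ) :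
    MonoidAlgebra.of R G U * Ssum V U Y X n
      = ∑ l ∈ range (n+2), ∑ l' ∈ range (n+2),
          algebraMap R (MonoidAlgebra R G) (X ^ l * Y ^ l') *
            ∑ k ∈ Icc (-((n+1:ℕ):ℤ)) ((n+1:ℕ):ℤ),
              alternatingAlpha n (k - 1) l' l • MonoidAlgebra.of R G (altProdInt U V k) := by
  have hins : ∀ (a b : ℤ),
      (∑ k ∈ Icc (-((n+1:ℕ):ℤ)) ((n+1:ℕ):ℤ),
        alternatingAlpha n (k - 1) a b • MonoidAlgebra.of R G (altProdInt U V k))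
      = ∑ k ∈ Icc (-(n:ℤ)) (n:ℤ),
        alternatingAlpha n k a b • MonoidAlgebra.of R G (altProdInt U V (k+1)) := by
    intro a b
    rw [← Finset.sum_subset (s₁ := Icc (-(n:ℤ)+1) ((n:ℤ)+1))
      (by intro x hx; simp only [mem_Icc] at hx ⊢; push_cast; omega)
      (by intro x hx hnx
          rw [alpha_eq_zero, zero_smul]
          simp only [mem_Icc, not_and_or, not_le] at hx hnx
          push_cast at hx ⊢
          omega)]
    rw [show Icc (-(n:ℤ)+1) ((n:ℤ)+1) = (Icc (-(n:ℤ)) (n:ℤ)).map (addRightEmbedding 1) from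
      (Finset.map_add_right_Icc _ _ _).symm, Finset.sum_map]
    refine Finset.sum_congr rfl fun k _ => ?_
    simp [addRightEmbedding]
  have hL : MonoidAlgebra.of R G U * Ssum V U Y X n
      = ∑ l ∈ range (n+1), ∑ l' ∈ range (n+1),
          algebraMap R (MonoidAlgebra R G) (Y ^ l * X ^ l') *
            ∑ k ∈ Icc (-(n:ℤ)) (n:ℤ),
              alternatingAlpha n k l l' • MonoidAlgebra.of R G (altProdInt U V (k+1)) := by
    unfold Ssum
    rw [Finset.mul_sum]
    refine Finset.sum_congr rfl fun l _ => ?_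
    rw [Finset.mul_sum]
    refine Finset.sum_congr rfl fun l' _ => ?_
    rw [← mul_assoc, ← Algebra.commutes, mul_assoc, Finset.mul_sum]
    refine congrArg _ (Finset.sum_congr rfl fun k _ => ?_)
    rw [mul_smul_comm, ← map_mul, mul_altProdInt U V hU k]
  rw [hL]
  symm
  refine (Finset.sum_congr rfl fun l _ => Finset.sum_congr rfl fun l' _ => by
    rw [hins (l':ℤ) (l:ℤ)]).trans ?_
  rw [← Finset.sum_subset (Finset.range_subset_range.mpr (by omega : n+1 ≤ n+2))
    (by intro l _ hl
        refine Finset.sum_eq_zero fun l' _ => ?_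
        rw [Finset.sum_eq_zero, mul_zero]
        intro k _
        rw [alpha_eq_zero, zero_smul]
        simp only [mem_range, not_lt] at hl
        push_cast; omega)]
  refine (Finset.sum_congr rfl fun l hl => ?_).trans (Finset.sum_comm)
  rw [← Finset.sum_subset (Finset.range_subset_range.mpr (by omega : n+1 ≤ n+2))
    (by intro l' _ hl'
        rw [Finset.sum_eq_zero, mul_zero]
        intro k _
        rw [alpha_eq_zero, zero_smul]
        simp only [mem_range, not_lt] at hl'
        push_cast; omega)]
  refine Finset.sum_congr rfl fun l' _ => ?_
  rw [mul_comm (X ^ l) (Y ^ l')]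

lemma B_eq (U V : G) (X Y : R) (n : ℕ) :
    algebraMap R (MonoidAlgebra R G) X * Ssum V U Y X n
      = ∑ l ∈ range (n+2), ∑ l' ∈ range (n+2),
          algebraMap R (MonoidAlgebra R G) (X ^ l * Y ^ l') *
            ∑ k ∈ Icc (-((n+1:ℕ):ℤ)) ((n+1:ℕ):ℤ),
              alternatingAlpha n (-k) l' ((l:ℤ) - 1) • MonoidAlgebra.of R G (altProdInt U V k) := by
  have hins : ∀ (a b : ℤ),
      (∑ k ∈ Icc (-((n+1:ℕ):ℤ)) ((n+1:ℕ):ℤ),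
        alternatingAlpha n (-k) a b • MonoidAlgebra.of R G (altProdInt U V k))
      = ∑ k ∈ Icc (-(n:ℤ)) (n:ℤ),
        alternatingAlpha n k a b • MonoidAlgebra.of R G (altProdInt V U k) := by
    intro a b
    have h1 : (∑ k ∈ Icc (-((n+1:ℕ):ℤ)) ((n+1:ℕ):ℤ),
        alternatingAlpha n (-k) a b • MonoidAlgebra.of R G (altProdInt U V k))
        = ∑ k ∈ Icc (-((n+1:ℕ):ℤ)) ((n+1:ℕ):ℤ),
            alternatingAlpha n k a b • MonoidAlgebra.of R G (altProdInt V U k) := by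
      refine Finset.sum_nbij' (i := fun k => -k) (j := fun k => -k) ?_ ?_ ?_ ?_ ?_
      · intro k hk; simp only [mem_Icc] at hk ⊢; omega
      · intro k hk; simp only [mem_Icc] at hk ⊢; omega
      · intro k _; ring
      · intro k _; ring
      · intro k _
        show alternatingAlpha n (-k) a b • MonoidAlgebra.of R G (altProdInt U V k)
          = alternatingAlpha n (-k) a b • MonoidAlgebra.of R G (altProdInt V U (-k))
        rw [altProdInt_neg V U k]
    rw [h1]
    symm
    refine Finset.sum_subset ?_ ?_
    · intro x hx; simp only [mem_Icc] at hx ⊢; push_cast; omega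
    · intro x hx hnx
      rw [alpha_eq_zero, zero_smul]
      simp only [mem_Icc, not_and_or, not_le] at hx hnx
      push_cast at hx
      omega
  have hL : algebraMap R (MonoidAlgebra R G) X * Ssum V U Y X n
      = ∑ l ∈ range (n+1), ∑ l' ∈ range (n+1),
          algebraMap R (MonoidAlgebra R G) (X ^ (l'+1) * Y ^ l) *
            ∑ k ∈ Icc (-(n:ℤ)) (n:ℤ),
              alternatingAlpha n k l l' • MonoidAlgebra.of R G (altProdInt V U k) := by
    unfold Ssum
    rw [Finset.mul_sum]
    refine Finset.sum_congr rfl fun l _ => ?_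
    rw [Finset.mul_sum]
    refine Finset.sum_congr rfl fun l' _ => ?_
    rw [← mul_assoc, ← map_mul]
    refine congrArg (· * _) (congrArg _ (by ring))
  rw [hL]
  symm
  refine (Finset.sum_congr rfl fun l _ => Finset.sum_congr rfl fun l' _ => by
    rw [hins (l':ℤ) ((l:ℤ)-1)]).trans ?_
  rw [Finset.sum_range_succ']
  have hT0 : (∑ l' ∈ range (n+2),
      algebraMap R (MonoidAlgebra R G) (X ^ 0 * Y ^ l') *
        ∑ k ∈ Icc (-(n:ℤ)) (n:ℤ),
          alternatingAlpha n k l' (((0:ℕ):ℤ) - 1) • MonoidAlgebra.of R G (altProdInt V U k))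
      = 0 := by
    refine Finset.sum_eq_zero fun l' _ => ?_
    rw [Finset.sum_eq_zero, mul_zero]
    intro k _
    rw [alpha_eq_zero, zero_smul]
    have : (((0:ℕ):ℤ) - 1) < 0 := by norm_num
    tauto
  rw [hT0, add_zero]
  refine (Finset.sum_congr rfl fun i _ => ?_).trans (Finset.sum_comm)
  rw [← Finset.sum_subset (Finset.range_subset_range.mpr (by omega : n+1 ≤ n+2))
    (by intro l' _ hl'
        rw [Finset.sum_eq_zero, mul_zero]
        intro k _
        rw [alpha_eq_zero, zero_smul]
        simp only [mem_range, not_lt] at hl'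
        push_cast; omega)]
  refine Finset.sum_congr rfl fun l' _ => ?_
  have : ((i:ℕ)+1:ℤ) - 1 = (i:ℤ) := by push_cast; ring
  rw [show (((i+1:ℕ):ℤ) - 1) = (i:ℤ) from by push_cast; ring]

lemma key : ∀ (m : ℕ) (U V : G) (X Y : R), U * U = 1 → V * V = 1 →
    altProd (MonoidAlgebra.of R G U + algebraMap R (MonoidAlgebra R G) X)
            (MonoidAlgebra.of R G V + algebraMap R (MonoidAlgebra R G) Y) m
      = Ssum U V X Y m := by
  intro m
  induction m with
  | zero =>
    intro U V X Y _ _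
    show (1 : MonoidAlgebra R G) = _
    unfold Ssum
    simp only [zero_add, range_one, sum_singleton, Nat.cast_zero, neg_zero, Icc_self]
    have h0 : altProdInt U V 0 = 1 := rfl
    have h1 : alternatingAlpha 0 0 0 0 = 1 := rfl
    rw [h0, h1, map_one]
    simp [← MonoidAlgebra.one_def]
  | succ n ih =>
    intro U V X Y hU hV
    show (MonoidAlgebra.of R G U + algebraMap R (MonoidAlgebra R G) X) *
        altProd (MonoidAlgebra.of R G V + algebraMap R (MonoidAlgebra R G) Y)
          (MonoidAlgebra.of R G U + algebraMap R (MonoidAlgebra R G) X) n = _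
    rw [ih V U Y X hV hU, add_mul, A_eq U V hU X Y n, B_eq U V X Y n]
    unfold Ssum
    rw [← Finset.sum_add_distrib]
    refine Finset.sum_congr rfl fun l hl => ?_
    rw [← Finset.sum_add_distrib]
    refine Finset.sum_congr rfl fun l' hl' => ?_
    rw [← mul_add, ← Finset.sum_add_distrib]
    refine congrArg _ (Finset.sum_congr rfl fun k hk => ?_)
    rw [← add_smul]
    refine congrArg (· • _) ?_
    have h2 : alternatingAlpha (n+1) k (l:ℤ) (l':ℤ)
        = alternatingAlpha n (k-1) l' l + alternatingAlpha n (-k) l' ((l:ℤ)-1) := by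
      show (if (l:ℤ) < 0 ∨ (l':ℤ) < 0 then 0 else _) = _
      rw [if_neg (by push_cast; omega)]
    exact h2.symm

end General

/-- The infinite dihedral group: the free product of two cyclic groups of order two, with
generators `u = of false` and `v = of true`. -/
def InfDihedral : Type := PresentedGroup ({FreeGroup.of false ^ 2, FreeGroup.of true ^ 2} :
  Set (FreeGroup Bool))

instance : Group InfDihedral :=
  inferInstanceAs (Group (PresentedGroup _))

/-- The generator `u` of the infinite dihedral group. -/
def dihU : InfDihedral := PresentedGroup.of false

/-- The generator `v` of the infinite dihedral group. -/
def dihV : InfDihedral := PresentedGroup.of true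

/-- The group algebra of the infinite dihedral group over `ℤ[x,y]`. -/
abbrev InfDihedralAlgebra : Type := MonoidAlgebra (MvPolynomial (Fin 2) ℤ) InfDihedral

/-- In the group algebra of the infinite dihedral group over `ℤ[x,y]`,
`⟨u + x, v + y⟩_m = Σ_{l,l'≥0} x^l y^{l'} · Σ_{k ∈ ℤ} α^{(m)}_{k,l,l'} ⟨u,v⟩_k`. -/
lemma dih_sq (b : Bool) : (PresentedGroup.of b : InfDihedral) * PresentedGroup.of b = 1 := by
  have h : FreeGroup.of b ^ 2 ∈ Subgroup.normalClosure
      ({FreeGroup.of false ^ 2, FreeGroup.of true ^ 2} : Set (FreeGroup Bool)) :=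
    Subgroup.subset_normalClosure (by cases b <;> simp)
  show ((QuotientGroup.mk (FreeGroup.of b) * QuotientGroup.mk (FreeGroup.of b) : FreeGroup Bool ⧸ Subgroup.normalClosure ({FreeGroup.of false ^ 2, FreeGroup.of true ^ 2} : Set (FreeGroup Bool)))) = (1 : FreeGroup Bool ⧸ Subgroup.normalClosure ({FreeGroup.of false ^ 2, FreeGroup.of true ^ 2} : Set (FreeGroup Bool)))
  exact (QuotientGroup.eq_one_iff (FreeGroup.of b * FreeGroup.of b)).mpr (by rwa [← pow_two])


theorem altProd_expansion_infinite_dihedral (m : ℕ) :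
    altProd
      (MonoidAlgebra.of (MvPolynomial (Fin 2) ℤ) InfDihedral dihU +
        algebraMap (MvPolynomial (Fin 2) ℤ) InfDihedralAlgebra (MvPolynomial.X 0))
      (MonoidAlgebra.of (MvPolynomial (Fin 2) ℤ) InfDihedral dihV +
        algebraMap (MvPolynomial (Fin 2) ℤ) InfDihedralAlgebra (MvPolynomial.X 1)) m =
    ∑ᶠ (l : ℕ) (l' : ℕ),
      algebraMap (MvPolynomial (Fin 2) ℤ) InfDihedralAlgebra
          (MvPolynomial.X 0 ^ l * MvPolynomial.X 1 ^ l') *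
        ∑ᶠ (k : ℤ), alternatingAlpha m k l l' •
          MonoidAlgebra.of (MvPolynomial (Fin 2) ℤ) InfDihedral (altProdInt dihU dihV k) := by
  rw [key m dihU dihV (MvPolynomial.X 0) (MvPolynomial.X 1) (dih_sq false) (dih_sq true)]
  symm
  have hk : ∀ (l l' : ℕ),
      (∑ᶠ (k : ℤ), alternatingAlpha m k l l' •
          MonoidAlgebra.of (MvPolynomial (Fin 2) ℤ) InfDihedral (altProdInt dihU dihV k))
      = ∑ k ∈ Icc (-(m:ℤ)) (m:ℤ), alternatingAlpha m k l l' •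
          MonoidAlgebra.of (MvPolynomial (Fin 2) ℤ) InfDihedral (altProdInt dihU dihV k) := by
    intro l l'
    refine finsum_eq_finset_sum_of_support_subset _ ?_
    intro k hks
    simp only [Function.mem_support] at hks
    simp only [coe_Icc, Set.mem_Icc]
    by_contra hc
    apply hks
    rw [alpha_eq_zero, zero_smul]
    push_cast at hc ⊢
    omega
  have h2 : ∀ l : ℕ,
      (∑ᶠ (l' : ℕ),
        algebraMap (MvPolynomial (Fin 2) ℤ) InfDihedralAlgebra
            (MvPolynomial.X 0 ^ l * MvPolynomial.X 1 ^ l') *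
          ∑ᶠ (k : ℤ), alternatingAlpha m k l l' •
            MonoidAlgebra.of (MvPolynomial (Fin 2) ℤ) InfDihedral (altProdInt dihU dihV k))
      = ∑ l' ∈ range (m+1),
          algebraMap (MvPolynomial (Fin 2) ℤ) InfDihedralAlgebra
              (MvPolynomial.X 0 ^ l * MvPolynomial.X 1 ^ l') *
            ∑ k ∈ Icc (-(m:ℤ)) (m:ℤ), alternatingAlpha m k l l' •
              MonoidAlgebra.of (MvPolynomial (Fin 2) ℤ) InfDihedral (altProdInt dihU dihV k) := by
    intro l
    rw [finsum_congr (fun l' => by rw [hk l l'])]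
    refine finsum_eq_finset_sum_of_support_subset _ ?_
    intro l' hs
    simp only [Function.mem_support] at hs
    simp only [coe_range, Set.mem_Iio]
    by_contra hc
    apply hs
    rw [Finset.sum_eq_zero, mul_zero]
    intro k _
    rw [alpha_eq_zero, zero_smul]
    push_cast
    omega
  rw [finsum_congr h2]
  rw [finsum_eq_finset_sum_of_support_subset _ (s := range (m+1)) ?_]
  · rfl
  · intro l hs
    simp only [Function.mem_support] at hs
    simp only [coe_range, Set.mem_Iio]
    by_contra hc
    apply hs
    refine Finset.sum_eq_zero fun l' _ => ?_
    rw [Finset.sum_eq_zero, mul_zero]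
    intro k _
    rw [alpha_eq_zero, zero_smul]
    push_cast
    omega
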